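/- Let R = k[x_1,...,x_n] and let p, q ⊆ R be homogeneous (monomial) prime ideals with height(p) = j, height(q) = l and l ≤ j - 2. Then *Ext^1_R(H^j_p(R), H^l_q(R)) = 0 in the category of Z^n-graded R-modules. -/

import Mathlib

open MvPolynomial

/-- `a ∈ Ω = {-1,0}^n`. -/
def isOm {n : ℕ} (a : Fin n → ℤ) : Prop := ∀ i, a i = 0 ∨ a i = -1

/-- The face prime ideal `p_a = (xᵢ : a i = -1)`. -/
noncomputable def faceIdeal {n : ℕ} (k : Type*) [CommSemiring k] (a : Fin n → ℤ) :
    Ideal (MvPolynomial (Fin n) k) :=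
  Ideal.span (MvPolynomial.X '' {i | a i = -1})

/-- `|a|`, the number of `-1` entries of `a ∈ Ω`. -/
def wt {n : ℕ} (a : Fin n → ℤ) : ℕ := (Finset.univ.filter fun i => a i = -1).card

/-- The local cohomology module `H^r_I(R)` for `R = k[x₁,…,xₙ]`, as a type. -/
abbrev LC {n : ℕ} (k : Type) [Field k] (I : Ideal (MvPolynomial (Fin n) k)) (r : ℕ) : Type :=
  ((localCohomology I r).obj
    (ModuleCat.of (MvPolynomial (Fin n) k) (MvPolynomial (Fin n) k)))

/-- A family of `k`-subspaces indexed by `ℤⁿ` is a compatible `ℤⁿ`-grading of an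
`R = k[x₁,…,xₙ]`-module when multiplication by `xᵢ` raises degrees by `eᵢ`. -/
def GradingCompat {n : ℕ} (k : Type) [Field k] (M : Type*) [AddCommGroup M]
    [Module (MvPolynomial (Fin n) k) M] [Module k M]
    (g : (Fin n → ℤ) → Submodule k M) : Prop :=
  ∀ (i : Fin n) (d : Fin n → ℤ), ∀ m ∈ g d,
    (MvPolynomial.X i : MvPolynomial (Fin n) k) • m ∈ g (d + Pi.single i 1)

/-- `g` is the grading of an `ε`-straight module structure (internal, compatible, finite
dimensional pieces, with multiplication `x^b : M_d → M_{d+b}` bijective whenever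
`d i < 0 → d i + b i < 0` for all `i`). -/
def IsEpsStraight {n : ℕ} (k : Type) [Field k] (M : Type*) [AddCommGroup M]
    [Module (MvPolynomial (Fin n) k) M] [Module k M]
    (g : (Fin n → ℤ) → Submodule k M) : Prop :=
  DirectSum.IsInternal g ∧ GradingCompat k M g ∧
  (∀ d : Fin n → ℤ, Module.Finite k ↥(g d)) ∧
  ∀ (b : Fin n → ℕ) (d : Fin n → ℤ), (∀ i, d i < 0 → d i + (b i : ℤ) < 0) →
    (∀ y ∈ g d, ((∏ i, MvPolynomial.X i ^ b i : MvPolynomial (Fin n) k)) • y = 0 → y = 0) ∧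
    (∀ z ∈ g (d + fun i => (b i : ℤ)),
      ∃ y ∈ g d, ((∏ i, MvPolynomial.X i ^ b i : MvPolynomial (Fin n) k)) • y = z)

/-- The Hilbert function of the canonical `ℤⁿ`-grading of `H^{|a|}_{p_a}(R)`: the degree-`d`
piece is one-dimensional when `dᵢ < 0` exactly for the `i` with `a i = -1`, and `0`
otherwise. -/
def HilbH {n : ℕ} (k : Type) [Field k] (M : Type*) [AddCommGroup M] [Module k M]
    (a : Fin n → ℤ) (g : (Fin n → ℤ) → Submodule k M) : Prop :=
  ∀ d : Fin n → ℤ, Module.finrank k (g d) =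
    if (∀ i, (a i = -1 → d i < 0) ∧ (a i = 0 → 0 ≤ d i)) then 1 else 0


open DirectSum

lemma mem_bot_eq_zero {k M : Type*} [Field k] [AddCommGroup M] [Module k M]
    {p : Submodule k M} (hp : p = ⊥) {x : M} (hx : x ∈ p) : x = 0 := by
  subst hp; simpa using hx

lemma aux_mapRange {k : Type} [Field k] {ι' : Type} [DecidableEq ι']
    {M N : Type*} [AddCommGroup M] [Module k M] [AddCommGroup N] [Module k N]
    (gM : ι' → Submodule k M) (gN : ι' → Submodule k N)
    (f : M →ₗ[k] N) (hf : ∀ d, ∀ m ∈ gM d, f m ∈ gN d) (x : ⨁ d, (gM d)) :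
    DirectSum.coeLinearMap gN
      (DFinsupp.mapRange.linearMap (fun d => f.restrict (hf d)) x)
      = f (DirectSum.coeLinearMap gM x) := by
  induction x using DirectSum.induction_on with
  | zero => simp
  | of i m =>
      have h1 : (DFinsupp.mapRange.linearMap (fun d => f.restrict (hf d))
          (DirectSum.of (fun d => gM d) i m))
          = DirectSum.of (fun d => gN d) i (f.restrict (hf i) m) := by
        exact DFinsupp.mapRange_single (hf := fun i => map_zero _)
      rw [h1, DirectSum.coeLinearMap_of, DirectSum.coeLinearMap_of]
      rfl
  | add x y hx hy => simp only [map_add, hx, hy]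

lemma aux_comp {k : Type} [Field k] {ι' : Type} [DecidableEq ι']
    {M N : Type*} [AddCommGroup M] [Module k M] [AddCommGroup N] [Module k N]
    (gM : ι' → Submodule k M) (gN : ι' → Submodule k N)
    (hN : DirectSum.IsInternal gN)
    (f : M →ₗ[k] N) (hf : ∀ d, ∀ m ∈ gM d, f m ∈ gN d)
    (x : ⨁ d, (gM d)) (d : ι') (y : N) (hy : y ∈ gN d)
    (h : f (DirectSum.coeLinearMap gM x) = y) : f ↑(x d) = y := by
  have hinj : Function.Injective (DirectSum.coeLinearMap gN) :=
    (LinearEquiv.ofBijective (DirectSum.coeLinearMap gN) hN).injective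
  have h2 : DirectSum.coeLinearMap gN
      (DFinsupp.mapRange.linearMap (fun c => f.restrict (hf c)) x)
      = DirectSum.coeLinearMap gN (DirectSum.of (fun c => gN c) d ⟨y, hy⟩) := by
    rw [aux_mapRange, h, DirectSum.coeLinearMap_of]
  have h3 := hinj h2
  have h4 := congrArg (fun z => z d) h3
  simp only [DFinsupp.mapRange.linearMap] at h4
  have h5 : (f.restrict (hf d)) (x d) = (⟨y, hy⟩ : gN d) := by
    simp only [DirectSum.of_eq_same] at h4
    exact h4
  exact congrArg Subtype.val h5

set_option maxHeartbeats 1000000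

/-- Vanishing of the graded Ext group `*Ext¹_R(H^j_p(R), H^l_q(R))` for monomial primes
`p = p_a`, `q = p_b` of heights `j = |a|`, `l = |b|` with `l ≤ j - 2`:  every extension of
`ℤⁿ`-graded modules `0 → H^l_q(R) → E → H^j_p(R) → 0` (with degree-preserving maps) admits
a degree-preserving `R`-linear splitting.  The graded modules `H^l_{p_a}(R)`, `H^l_{p_b}(R)`
are encoded as modules isomorphic to the corresponding local cohomology modules, equipped
with their canonical (`ε`-straight) gradings. -/
theorem stmt_15 (n : ℕ) (k : Type) [Field k] (a b : Fin n → ℤ)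
    (ha : isOm a) (hb : isOm b) (j l : ℕ) (hwa : wt a = j) (hwb : wt b = l)
    (hjl : l + 2 ≤ j)
    (MA : Type) [AddCommGroup MA] [Module (MvPolynomial (Fin n) k) MA] [Module k MA]
    [IsScalarTower k (MvPolynomial (Fin n) k) MA]
    (MB : Type) [AddCommGroup MB] [Module (MvPolynomial (Fin n) k) MB] [Module k MB]
    [IsScalarTower k (MvPolynomial (Fin n) k) MB]
    (eA : MA ≃ₗ[MvPolynomial (Fin n) k] LC k (faceIdeal k a) j)
    (eB : MB ≃ₗ[MvPolynomial (Fin n) k] LC k (faceIdeal k b) l)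
    (gA : (Fin n → ℤ) → Submodule k MA) (hgA : IsEpsStraight k MA gA)
    (hhA : HilbH k MA a gA)
    (gB : (Fin n → ℤ) → Submodule k MB) (hgB : IsEpsStraight k MB gB)
    (hhB : HilbH k MB b gB)
    -- an arbitrary graded extension `0 → MB → E → MA → 0`
    (E : Type) [AddCommGroup E] [Module (MvPolynomial (Fin n) k) E] [Module k E]
    [IsScalarTower k (MvPolynomial (Fin n) k) E]
    (gE : (Fin n → ℤ) → Submodule k E)
    (hgE : DirectSum.IsInternal gE ∧ GradingCompat k E gE)
    (ι : MB →ₗ[MvPolynomial (Fin n) k] E) (π : E →ₗ[MvPolynomial (Fin n) k] MA)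
    (hι : Function.Injective ι) (hπ : Function.Surjective π)
    (hexact : LinearMap.range ι = LinearMap.ker π)
    (hιgr : ∀ d : Fin n → ℤ, ∀ m ∈ gB d, ι m ∈ gE d)
    (hπgr : ∀ d : Fin n → ℤ, ∀ m ∈ gE d, π m ∈ gA d) :
    -- the extension splits by a graded section
    ∃ σ : MA →ₗ[MvPolynomial (Fin n) k] E,
      π.comp σ = LinearMap.id ∧ ∀ d : Fin n → ℤ, ∀ m ∈ gA d, σ m ∈ gE d := by
  classical
  obtain ⟨hgEint, hgEcompat⟩ := hgE
  obtain ⟨hgAint, hgAcompat, hgAfin, -⟩ := hgA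
  obtain ⟨hgBint, hgBcompat, hgBfin, -⟩ := hgB
  set R := MvPolynomial (Fin n) k with hR
  -- the support conditions
  set condA : (Fin n → ℤ) → Prop :=
    fun d => ∀ i, (a i = -1 → d i < 0) ∧ (a i = 0 → 0 ≤ d i) with hcondA
  set condB : (Fin n → ℤ) → Prop :=
    fun d => ∀ i, (b i = -1 → d i < 0) ∧ (b i = 0 → 0 ≤ d i) with hcondB
  -- vanishing of graded pieces outside the support
  have hA0 : ∀ d, ¬ condA d → gA d = ⊥ := by
    intro d hd
    haveI := hgAfin d
    have h1 := hhA d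
    rw [if_neg hd] at h1
    haveI : Subsingleton (gA d) := Module.finrank_zero_iff.mp h1
    exact Submodule.eq_bot_of_subsingleton
  have hB0 : ∀ d, ¬ condB d → gB d = ⊥ := by
    intro d hd
    haveI := hgBfin d
    have h1 := hhB d
    rw [if_neg hd] at h1
    haveI : Subsingleton (gB d) := Module.finrank_zero_iff.mp h1
    exact Submodule.eq_bot_of_subsingleton
  -- combinatorics: condA d implies gB vanishes at d and at d + eᵢ
  have hcard : ∀ (d' : Fin n → ℤ) (s : Finset (Fin n)), condB d' →
      (∀ i ∈ s, d' i < 0) → s.card ≤ l := by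
    intro d' s h1 h2
    rw [← hwb]
    apply Finset.card_le_card
    intro i hi
    simp only [wt, Finset.mem_filter, Finset.mem_univ, true_and]
    rcases hb i with h | h
    · exact absurd ((h1 i).2 h) (not_le.mpr (h2 i hi))
    · exact h
  have hBd : ∀ d, condA d → gB d = ⊥ := by
    intro d hd
    apply hB0
    intro hc
    have h1 : (Finset.univ.filter fun i => a i = -1).card ≤ l := by
      apply hcard d _ hc
      intro i hi
      exact (hd i).1 (Finset.mem_filter.mp hi).2
    rw [show (Finset.univ.filter fun i => a i = -1).card = wt a from rfl, hwa] at h1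
    omega
  have hBd' : ∀ (d : Fin n → ℤ) (i : Fin n), condA d →
      gB (d + Pi.single i 1) = ⊥ := by
    intro d i hd
    apply hB0
    intro hc
    have h1 : ((Finset.univ.filter fun m => a m = -1).erase i).card ≤ l := by
      apply hcard _ _ hc
      intro m hm
      obtain ⟨hmi, hm2⟩ := Finset.mem_erase.mp hm
      have h2 : d m < 0 := (hd m).1 (Finset.mem_filter.mp hm2).2
      have h3 : (d + Pi.single i 1 : Fin n → ℤ) m = d m := by
        simp [Pi.single_eq_of_ne hmi]
      rw [h3]
      exact h2
    have h4 : (Finset.univ.filter fun m => a m = -1).card - 1 ≤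
        ((Finset.univ.filter fun m => a m = -1).erase i).card :=
      Finset.pred_card_le_card_erase
    rw [show (Finset.univ.filter fun m => a m = -1).card = wt a from rfl, hwa] at h4
    omega
  -- decomposition equivalences
  let eqA := LinearEquiv.ofBijective (DirectSum.coeLinearMap gA) hgAint
  let eqB := LinearEquiv.ofBijective (DirectSum.coeLinearMap gB) hgBint
  let eqE := LinearEquiv.ofBijective (DirectSum.coeLinearMap gE) hgEint
  let ιk : MB →ₗ[k] E := ι.restrictScalars k
  let πk : E →ₗ[k] MA := π.restrictScalars k
  -- key injectivity
  have keyInj : ∀ d, gB d = ⊥ → ∀ e ∈ gE d, π e = 0 → e = 0 := by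
    intro d hBd0 e he hpe
    have hmem : e ∈ LinearMap.range ι := by rw [hexact]; exact hpe
    obtain ⟨mb, hmb⟩ := hmem
    have hcoe : ιk (DirectSum.coeLinearMap gB (eqB.symm mb)) = e := by
      have : DirectSum.coeLinearMap gB (eqB.symm mb) = mb := eqB.apply_symm_apply mb
      rw [this]; exact hmb
    have h1 := aux_comp gB gE hgEint ιk hιgr (eqB.symm mb) d e he hcoe
    have h5 : ((eqB.symm mb) d : MB) = 0 :=
      mem_bot_eq_zero hBd0 (Submodule.coe_mem _)
    rw [← h1, h5, map_zero]
  -- key surjectivity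
  have keySurj : ∀ d (m : MA), m ∈ gA d → ∃ e ∈ gE d, π e = m := by
    intro d m hm
    obtain ⟨e0, he0⟩ := hπ m
    refine ⟨((eqE.symm e0) d : E), Submodule.coe_mem _, ?_⟩
    apply aux_comp gE gA hgAint πk hπgr (eqE.symm e0) d m hm
    have : DirectSum.coeLinearMap gE (eqE.symm e0) = e0 := eqE.apply_symm_apply e0
    rw [this]; exact he0
  -- piecewise sections
  have hsd : ∀ d, ∃ s : gA d →ₗ[k] E,
      ∀ m : gA d, s m ∈ gE d ∧ π (s m) = m := by
    intro d
    by_cases hc : condA d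
    · have hbij : Function.Bijective (πk.restrict (hπgr d) : gE d →ₗ[k] gA d) := by
        constructor
        · intro x y hxy
          have hval : π (x : E) = π (y : E) := congrArg Subtype.val hxy
          have h1 : π ((x : E) - y) = 0 := by rw [map_sub, hval, sub_self]
          have h2 : ((x : E) - y) = 0 :=
            keyInj d (hBd d hc) _ (sub_mem x.2 y.2) h1
          exact Subtype.ext (sub_eq_zero.mp h2)
        · intro m
          obtain ⟨e, he, hpe⟩ := keySurj d m m.2
          exact ⟨⟨e, he⟩, Subtype.ext hpe⟩
      let eqd := LinearEquiv.ofBijective _ hbij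
      refine ⟨(gE d).subtype.comp (eqd.symm : gA d →ₗ[k] gE d), fun m => ?_⟩
      constructor
      · exact Submodule.coe_mem _
      · have := eqd.apply_symm_apply m
        have h1 : (πk.restrict (hπgr d)) (eqd.symm m) = m := this
        have h2 := congrArg Subtype.val h1
        exact h2
    · refine ⟨0, fun m => ?_⟩
      have hm0 : (m : MA) = 0 := mem_bot_eq_zero (hA0 d hc) m.2
      refine ⟨by simp, ?_⟩
      simp [hm0]
  choose sd hsdp using hsd
  let τ : (⨁ d, (gA d)) →ₗ[k] E := DirectSum.toModule k _ E sd
  let σ0 : MA →ₗ[k] E := τ.comp (eqA.symm : MA →ₗ[k] ⨁ d, (gA d))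
  have hσ0 : ∀ (d : Fin n → ℤ) (m : MA) (hm : m ∈ gA d), σ0 m = sd d ⟨m, hm⟩ := by
    intro d m hm
    have h1 : eqA.symm m = DirectSum.lof k _ (fun c => (gA c)) d ⟨m, hm⟩ := by
      apply eqA.injective
      rw [eqA.apply_symm_apply]
      show m = DirectSum.coeLinearMap gA _
      rw [DirectSum.lof_eq_of, DirectSum.coeLinearMap_of]
    show τ (eqA.symm m) = sd d ⟨m, hm⟩
    rw [h1]
    exact DirectSum.toModule_lof (R := k) (ι := Fin n → ℤ) (M := fun c => ↥(gA c)) (N := E) (φ := sd) d ⟨m, hm⟩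
  have hgraded : ∀ d, ∀ m ∈ gA d, σ0 m ∈ gE d := by
    intro d m hm
    rw [hσ0 d m hm]
    exact (hsdp d ⟨m, hm⟩).1
  have hsec : ∀ m : MA, π (σ0 m) = m := by
    intro m
    have htop := hgAint.submodule_iSup_eq_top
    have hm : m ∈ ⨆ d, gA d := by rw [htop]; trivial
    refine Submodule.iSup_induction (motive := fun m => π (σ0 m) = m) gA hm ?_ ?_ ?_
    · intro d x hx
      rw [hσ0 d x hx]
      exact (hsdp d ⟨x, hx⟩).2
    · simp
    · intro x y hx hy
      rw [map_add, map_add, hx, hy]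
  -- key commutation with X i
  have hX : ∀ (i : Fin n) (m : MA), σ0 ((MvPolynomial.X i : R) • m)
      = (MvPolynomial.X i : R) • σ0 m := by
    intro i m
    have htop := hgAint.submodule_iSup_eq_top
    have hm : m ∈ ⨆ d, gA d := by rw [htop]; trivial
    refine Submodule.iSup_induction
      (motive := fun m => σ0 ((MvPolynomial.X i : R) • m)
        = (MvPolynomial.X i : R) • σ0 m) gA hm ?_ ?_ ?_
    · intro d x hx
      by_cases hc : condA d
      · have h1 : (MvPolynomial.X i : R) • x ∈ gA (d + Pi.single i 1) :=
          hgAcompat i d x hx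
        have h2 : σ0 ((MvPolynomial.X i : R) • x) ∈ gE (d + Pi.single i 1) :=
          hgraded _ _ h1
        have h3 : (MvPolynomial.X i : R) • σ0 x ∈ gE (d + Pi.single i 1) :=
          hgEcompat i d _ (hgraded d x hx)
        have h4 : π (σ0 ((MvPolynomial.X i : R) • x)) = (MvPolynomial.X i : R) • x := by
          rw [hσ0 _ _ h1]; exact (hsdp _ _).2
        have h5 : π ((MvPolynomial.X i : R) • σ0 x) = (MvPolynomial.X i : R) • x := by
          rw [map_smul, hsec]
      -- difference is killed
        have h6 : σ0 ((MvPolynomial.X i : R) • x) - (MvPolynomial.X i : R) • σ0 x = 0 := by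
          apply keyInj _ (hBd' d i hc) _ (sub_mem h2 h3)
          rw [map_sub, h4, h5, sub_self]
        exact sub_eq_zero.mp h6
      · have hx0 : x = 0 := mem_bot_eq_zero (hA0 d hc) hx
        simp [hx0]
    · simp
    · intro x y hx hy
      rw [smul_add, map_add, hx, hy, map_add, smul_add]
  -- full R-linearity
  have hRlin : ∀ (p : R) (m : MA), σ0 (p • m) = p • σ0 m := by
    intro p
    induction p using MvPolynomial.induction_on with
    | C c =>
        intro m
        have h1 : (MvPolynomial.C c : R) • m = c • m := by
          rw [← MvPolynomial.algebraMap_eq, algebraMap_smul]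
        have h2 : (MvPolynomial.C c : R) • σ0 m = c • σ0 m := by
          rw [← MvPolynomial.algebraMap_eq, algebraMap_smul]
        rw [h1, h2, map_smul]
    | add p q hp hq =>
        intro m
        rw [add_smul, map_add, hp, hq, add_smul]
    | mul_X p i hp =>
        intro m
        rw [mul_smul, hp, hX, mul_smul]
  refine ⟨{ toFun := σ0, map_add' := map_add σ0, map_smul' := hRlin }, ?_, ?_⟩
  · ext m
    exact hsec m
  · intro d m hm
    exact hgraded d m hm
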